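/- Let R be an integral domain of prime characteristic p that admits an e-iterated Frobenius splitting for some e ≥ 1, let K be the fraction field of R, and let ι : R → K be the canonical embedding. If x ∈ K satisfies x^p ∈ ι(R), then x ∈ ι(R) (R is weakly normal). -/

import Mathlib

/-- `φ : R → R` is an `e`-iterated Frobenius splitting of `R` (char `p`):
an additive map with `φ (r ^ p ^ e * x) = r * φ x` and `φ 1 = 1`. -/
def IsFrobSplitting {R : Type*} [CommRing R] (p e : ℕ) (φ : R → R) : Prop :=
  (∀ x y : R, φ (x + y) = φ x + φ y) ∧
  (∀ r x : R, φ (r ^ p ^ e * x) = r * φ x) ∧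
  φ 1 = 1

/-- A Frobenius split domain `R` of characteristic `p` is weakly normal: if an element
`x` of the fraction field satisfies `x^p ∈ R`, then `x ∈ R`. -/
theorem weaklyNormal_of_frobSplitting {R : Type*} [CommRing R] [IsDomain R]
    (p : ℕ) [Fact p.Prime] [CharP R p] (e : ℕ) (he : 1 ≤ e)
    (φ : R → R) (hφ : IsFrobSplitting p e φ)
    (x : FractionRing R)
    (hx : x ^ p ∈ Set.range (algebraMap R (FractionRing R))) :
    x ∈ Set.range (algebraMap R (FractionRing R)) := by
  obtain ⟨_, hmul, hone⟩ := hφ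
  obtain ⟨a, ha⟩ := hx
  obtain ⟨b, c, hcmem, hx⟩ := IsFractionRing.div_surjective (A := R) x
  set ι := algebraMap R (FractionRing R)
  have hc0 : (c : R) ≠ 0 := nonZeroDivisors.ne_zero hcmem
  have hιc : ι c ≠ 0 := fun h => hc0 (IsFractionRing.injective R (FractionRing R)
    (h.trans (map_zero ι).symm))
  have hxc : x * ι c = ι b := by
    rw [← hx]; field_simp
  -- x ^ (p ^ e) = ι (a ^ (p ^ (e-1)))
  have hpe : p ^ e = p * p ^ (e - 1) := by
    conv_lhs => rw [show e = 1 + (e - 1) from (Nat.add_sub_cancel' he).symm]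
    rw [pow_add, pow_one]
  have hxpe : x ^ (p ^ e) = ι (a ^ (p ^ (e - 1))) := by
    rw [hpe, pow_mul, ← ha, ← map_pow]
  have key : (b : R) ^ (p ^ e) = a ^ (p ^ (e - 1)) * c ^ (p ^ e) := by
    apply IsFractionRing.injective R (FractionRing R)
    show ι ((b : R) ^ (p ^ e)) = ι (a ^ (p ^ (e - 1)) * c ^ (p ^ e))
    simp only [map_pow, map_mul, ← hxc, mul_pow, hxpe]
  have hb : (b : R) = c * φ (a ^ (p ^ (e - 1))) := by
    have := hmul c (a ^ (p ^ (e - 1)))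
    calc (b : R) = b * φ 1 := by rw [hone, mul_one]
      _ = φ (b ^ (p ^ e) * 1) := (hmul b 1).symm
      _ = φ ((c : R) ^ (p ^ e) * a ^ (p ^ (e - 1))) := by rw [mul_one, key, mul_comm]
      _ = c * φ (a ^ (p ^ (e - 1))) := hmul c _
  refine ⟨φ (a ^ (p ^ (e - 1))), ?_⟩
  have : x * ι c = ι (φ (a ^ (p ^ (e - 1)))) * ι c := by
    rw [hxc, hb, map_mul, mul_comm]
  exact (mul_right_cancel₀ hιc this).symm
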